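/- Let A be a unital C*-algebra of real rank zero, let X and Y be unital Banach right A-modules, and let T : X → Y be a continuous linear map. Then ‖ad(T)‖ ≤ 8 · sup{‖e⊥Te‖ : e ∈ A projection}, where ‖ad(T)‖ = sup{‖aT − Ta‖ : a ∈ A, ‖a‖ ≤ 1} and (e⊥Te)(x) = T(x·e⊥)·e. -/

import Mathlib

/-- A contractive Banach right module over a (possibly non-unital) C*-algebra `A`:
the action `(x, a) ↦ x·a` is a continuous bilinear map `X × A → X` satisfying
`(x·a)·b = x·(a*b)` and `‖x·a‖ ≤ ‖x‖·‖a‖`. -/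
structure BanachRightModule (A X : Type*) [NonUnitalCStarAlgebra A]
    [NormedAddCommGroup X] [NormedSpace ℂ X] where
  act : X →L[ℂ] A →L[ℂ] X
  act_mul : ∀ (x : X) (a b : A), act (act x a) b = act x (a * b)
  norm_act_le : ∀ (x : X) (a : A), ‖act x a‖ ≤ ‖x‖ * ‖a‖

section Defs

variable {A X Y : Type*} [NonUnitalCStarAlgebra A]
  [NormedAddCommGroup X] [NormedSpace ℂ X]
  [NormedAddCommGroup Y] [NormedSpace ℂ Y]

/-- A projection in a C*-algebra: a self-adjoint idempotent. -/
def IsProjection {A : Type*} [NonUnitalCStarAlgebra A] (e : A) : Prop :=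
  IsSelfAdjoint e ∧ IsIdempotentElem e

/-- The operator `aTb : x ↦ T(x·a)·b`. -/
noncomputable def sandwich (ρX : BanachRightModule A X) (ρY : BanachRightModule A Y)
    (T : X →L[ℂ] Y) (a b : A) : X →L[ℂ] Y :=
  ((ρY.act.flip b).comp T).comp (ρX.act.flip a)

/-- The set of continuous right `A`-module homomorphisms from `X` to `Y`. -/
def homSet (ρX : BanachRightModule A X) (ρY : BanachRightModule A Y) :
    Set (X →L[ℂ] Y) :=
  {Φ | ∀ (x : X) (a : A), Φ (ρX.act x a) = ρY.act (Φ x) a}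

/-- `β(T) = sup{‖eTf‖ : e, f ∈ A projections with ef = 0}`. -/
noncomputable def betaConst (ρX : BanachRightModule A X) (ρY : BanachRightModule A Y)
    (T : X →L[ℂ] Y) : ℝ :=
  sSup {r : ℝ | ∃ e f : A, IsProjection e ∧ IsProjection f ∧ e * f = 0 ∧
    r = ‖sandwich ρX ρY T e f‖}

/-- `γ(T) = sup{‖aTb‖ : a, b ∈ A positive contractions with ab = 0}`. -/
noncomputable def gammaConst [PartialOrder A] [StarOrderedRing A]
    (ρX : BanachRightModule A X) (ρY : BanachRightModule A Y)
    (T : X →L[ℂ] Y) : ℝ :=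
  sSup {r : ℝ | ∃ a b : A, 0 ≤ a ∧ 0 ≤ b ∧ ‖a‖ ≤ 1 ∧ ‖b‖ ≤ 1 ∧ a * b = 0 ∧
    r = ‖sandwich ρX ρY T a b‖}

/-- `δ(T) = sup_{‖x‖ ≤ 1} inf{‖T(x) − Φ(x)‖ : Φ ∈ Hom_A(X,Y)}`. -/
noncomputable def deltaConst (ρX : BanachRightModule A X) (ρY : BanachRightModule A Y)
    (T : X →L[ℂ] Y) : ℝ :=
  sSup {r : ℝ | ∃ x : X, ‖x‖ ≤ 1 ∧
    r = Metric.infDist (T x) ((fun Φ : X →L[ℂ] Y => Φ x) '' homSet ρX ρY)}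

/-- `‖ad(T)‖ = sup{‖aT − Ta‖ : a ∈ A, ‖a‖ ≤ 1}`, where `(aT)(x) = T(x·a)` and
`(Ta)(x) = T(x)·a`. -/
noncomputable def adNorm (ρX : BanachRightModule A X) (ρY : BanachRightModule A Y)
    (T : X →L[ℂ] Y) : ℝ :=
  sSup {r : ℝ | ∃ a : A, ‖a‖ ≤ 1 ∧
    r = ‖T.comp (ρX.act.flip a) - (ρY.act.flip a).comp T‖}

/-- The module `X` is essential: the linear span of `{x·a : x ∈ X, a ∈ A}` is dense. -/
def Essential (ρX : BanachRightModule A X) : Prop :=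
  Dense (Submodule.span ℂ {z : X | ∃ (x : X) (a : A), z = ρX.act x a} : Set X)

end Defs


set_option linter.unusedSectionVars false

section MyAux

lemma myContOn_finite {s : Set ℝ} (hs : s.Finite) (f : ℝ → ℝ) : ContinuousOn f s := by
  rw [continuousOn_iff_continuous_restrict]
  haveI := hs.to_subtype
  exact continuous_of_discreteTopology

variable {A X Y : Type*} [CStarAlgebra A]
  [NormedAddCommGroup X] [NormedSpace ℂ X] [CompleteSpace X]
  [NormedAddCommGroup Y] [NormedSpace ℂ Y] [CompleteSpace Y]

/-- auxiliary: the commutator-type operator `aT - Ta`. -/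
noncomputable def Dop' (ρX : X →L[ℂ] A →L[ℂ] X) (ρY : Y →L[ℂ] A →L[ℂ] Y)
    (T : X →L[ℂ] Y) (a : A) : X →L[ℂ] Y :=
  T.comp (ρX.flip a) - (ρY.flip a).comp T

variable (ρX : X →L[ℂ] A →L[ℂ] X) (ρY : Y →L[ℂ] A →L[ℂ] Y) (T : X →L[ℂ] Y)

lemma Dop'_apply (a : A) (x : X) : Dop' ρX ρY T a x = T (ρX x a) - ρY (T x) a := rfl

lemma Dop'_add (a b : A) : Dop' ρX ρY T (a + b) = Dop' ρX ρY T a + Dop' ρX ρY T b := by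
  ext x; simp [Dop'_apply]; abel

lemma Dop'_smul (c : ℂ) (a : A) : Dop' ρX ρY T (c • a) = c • Dop' ρX ρY T a := by
  ext x; simp [Dop'_apply, smul_sub]

lemma Dop'_smul_real (c : ℝ) (a : A) : Dop' ρX ρY T (c • a) = c • Dop' ρX ρY T a := by
  ext x
  simp only [Dop'_apply, ContinuousLinearMap.map_smul_of_tower,
    ContinuousLinearMap.smul_apply, smul_sub]

lemma Dop'_sub (a b : A) : Dop' ρX ρY T (a - b) = Dop' ρX ρY T a - Dop' ρX ρY T b := by
  ext x; simp [Dop'_apply]; abel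

lemma norm_flip_le (hρ : ∀ (x : X) (a : A), ‖ρX x a‖ ≤ ‖x‖ * ‖a‖) (a : A) :
    ‖ρX.flip a‖ ≤ ‖a‖ :=
  ContinuousLinearMap.opNorm_le_bound _ (norm_nonneg a) fun x => by
    simpa [mul_comm] using hρ x a

lemma norm_Dop'_le (hρX : ∀ (x : X) (a : A), ‖ρX x a‖ ≤ ‖x‖ * ‖a‖)
    (hρY : ∀ (y : Y) (a : A), ‖ρY y a‖ ≤ ‖y‖ * ‖a‖) (a : A) :
    ‖Dop' ρX ρY T a‖ ≤ 2 * ‖T‖ * ‖a‖ := by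
  have h1 : ‖T.comp (ρX.flip a)‖ ≤ ‖T‖ * ‖a‖ :=
    le_trans (ContinuousLinearMap.opNorm_comp_le _ _)
      (mul_le_mul_of_nonneg_left (norm_flip_le ρX hρX a) (norm_nonneg T))
  have h2 : ‖(ρY.flip a).comp T‖ ≤ ‖a‖ * ‖T‖ :=
    le_trans (ContinuousLinearMap.opNorm_comp_le _ _)
      (mul_le_mul_of_nonneg_right (norm_flip_le ρY hρY a) (norm_nonneg T))
  calc ‖Dop' ρX ρY T a‖ ≤ ‖T.comp (ρX.flip a)‖ + ‖(ρY.flip a).comp T‖ := norm_sub_le _ _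
    _ ≤ ‖T‖ * ‖a‖ + ‖a‖ * ‖T‖ := add_le_add h1 h2
    _ = 2 * ‖T‖ * ‖a‖ := by ring

end MyAux

section MyAux2

variable {A X Y : Type*} [CStarAlgebra A]
  [NormedAddCommGroup X] [NormedSpace ℂ X] [CompleteSpace X]
  [NormedAddCommGroup Y] [NormedSpace ℂ Y] [CompleteSpace Y]
  (ρX : BanachRightModule A X) (ρY : BanachRightModule A Y)
  (T : X →L[ℂ] Y)

lemma Dop'_one (hX1 : ∀ x : X, ρX.act x 1 = x) (hY1 : ∀ y : Y, ρY.act y 1 = y) :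
    Dop' ρX.act ρY.act T 1 = 0 := by
  ext x
  simp [Dop'_apply, hX1, hY1]

lemma Dop'_proj (hX1 : ∀ x : X, ρX.act x 1 = x) (hY1 : ∀ y : Y, ρY.act y 1 = y)
    {S : ℝ} (hS : ∀ e : A, IsProjection e → ‖sandwich ρX ρY T (1 - e) e‖ ≤ S)
    {e : A} (he : IsProjection e) : ‖Dop' ρX.act ρY.act T e‖ ≤ 2 * S := by
  have key : Dop' ρX.act ρY.act T e
      = sandwich ρX ρY T (1 - (1 - e)) (1 - e) - sandwich ρX ρY T (1 - e) e := by
    ext x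
    have h1 : ρX.act x (1 - e) = x - ρX.act x e := by rw [map_sub, hX1]
    have h2 : ∀ y : Y, ρY.act y (1 - e) = y - ρY.act y e := fun y => by rw [map_sub, hY1]
    simp only [Dop'_apply, sandwich, sub_sub_cancel, ContinuousLinearMap.coe_comp',
      Function.comp_apply, ContinuousLinearMap.flip_apply, ContinuousLinearMap.sub_apply,
      h1, h2, map_sub, hX1, hY1]
    abel
  have he' : IsProjection (1 - e) := ⟨by rw [IsSelfAdjoint, star_sub, star_one, he.1.star_eq], he.2.one_sub⟩
  calc ‖Dop' ρX.act ρY.act T e‖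
      ≤ ‖sandwich ρX ρY T (1 - (1 - e)) (1 - e)‖ + ‖sandwich ρX ρY T (1 - e) e‖ := by
        rw [key]; exact norm_sub_le _ _
    _ ≤ S + S := add_le_add (hS _ he') (hS _ he)
    _ = 2 * S := by ring

lemma spectrumR_nonempty {A : Type*} [CStarAlgebra A] [Nontrivial A]
    {b : A} (hb : IsSelfAdjoint b) : (spectrum ℝ b).Nonempty := by
  rw [← hb.spectrumRestricts.image]
  exact (spectrum.nonempty b).image _

lemma Dop'_selfAdjoint_finite_aux (hX1 : ∀ x : X, ρX.act x 1 = x)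
    (hY1 : ∀ y : Y, ρY.act y 1 = y) [Nontrivial A]
    {S : ℝ} (hS : ∀ e : A, IsProjection e → ‖sandwich ρX ρY T (1 - e) e‖ ≤ S) :
    ∀ n : ℕ, ∀ b : A, IsSelfAdjoint b → (spectrum ℝ b).Finite →
      (spectrum ℝ b).ncard ≤ n →
      ‖Dop' ρX.act ρY.act T b‖ ≤ 2 * (sSup (spectrum ℝ b) - sInf (spectrum ℝ b)) * S := by
  intro n
  induction n with
  | zero =>
    intro b hb hfin hcard
    exact absurd ((Set.ncard_eq_zero hfin).mp (Nat.le_zero.mp hcard))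
      (spectrumR_nonempty hb).ne_empty
  | succ n ih =>
    intro b hb hfin hcard
    have hne : (spectrum ℝ b).Nonempty := spectrumR_nonempty hb
    set σ := spectrum ℝ b with hσ
    set M := sSup σ with hM
    set m := sInf σ with hm
    have hMmem : M ∈ σ := hne.csSup_mem hfin
    have hmmem : m ∈ σ := hne.csInf_mem hfin
    by_cases hone : σ.ncard ≤ 1
    · -- singleton spectrum
      have hsing : σ = {M} := by
        apply Set.eq_singleton_iff_unique_mem.mpr
        refine ⟨hMmem, fun x hx => ?_⟩
        rcases (Set.ncard_le_one_iff_eq hfin).mp hone with h | ⟨y, hy⟩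
        · exact absurd h hne.ne_empty
        · rw [hy] at hx hMmem
          rw [hx, hMmem]
      have hb1 : b = algebraMap ℝ A M := by
        conv_lhs => rw [← cfc_id (R := ℝ) (p := IsSelfAdjoint) b hb]
        rw [cfc_congr (g := fun _ => M) (fun x hx => by
          rw [← hσ, hsing] at hx; simpa using hx),
          cfc_const M b hb]
      have hMm : M = m := by
        rw [hm, hsing, csInf_singleton]
      rw [hb1, Algebra.algebraMap_eq_smul_one, Dop'_smul_real, Dop'_one ρX ρY T hX1 hY1,
        smul_zero, norm_zero, ← hMm]
      simp
    · push_neg at hone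
      set σ' := σ \ {M} with hσ'
      have hfin' : σ'.Finite := hfin.diff
      have hcard' : σ'.ncard = σ.ncard - 1 := Set.ncard_diff_singleton_of_mem hMmem
      have hcard2 : σ.ncard ≤ n + 1 := hcard
      have hne' : σ'.Nonempty := by
        apply Set.nonempty_of_ncard_ne_zero
        omega
      set M' := sSup σ' with hM'
      have hM'mem : M' ∈ σ' := hne'.csSup_mem hfin'
      have hM'lt : M' < M := lt_of_le_of_ne (le_csSup hfin.bddAbove hM'mem.1)
        (by simpa using hM'mem.2)
      have hlemma : ∀ x ∈ σ, x ≠ M → x ≤ M' := fun x hx hxM =>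
        le_csSup hfin'.bddAbove ⟨hx, hxM⟩
      set χ : ℝ → ℝ := fun x => if x ≤ M' then 0 else 1 with hχ
      set g : ℝ → ℝ := fun x => min x M' with hg
      have hcχ : ContinuousOn χ σ := myContOn_finite hfin χ
      have hcg : ContinuousOn g σ := myContOn_finite hfin g
      set e := cfc χ b with hedef
      set b' := cfc g b with hb'def
      have heproj : IsProjection e := by
        refine ⟨cfc_predicate χ b, ?_⟩
        unfold IsIdempotentElem
        rw [hedef, ← cfc_mul χ χ b hcχ hcχ]
        exact cfc_congr fun x _ => by by_cases h : x ≤ M' <;> simp [hχ, h]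
      have hb'sa : IsSelfAdjoint b' := cfc_predicate g b
      have himg : g '' σ = σ' := by
        apply Set.Subset.antisymm
        · rintro _ ⟨x, hx, rfl⟩
          by_cases h : x = M
          · rw [h, hg]
            simpa [min_eq_right hM'lt.le] using hM'mem
          · have hxle : x ≤ M' := hlemma x hx h
            rw [hg]
            simp only [min_eq_left hxle]
            exact ⟨hx, h⟩
        · rintro y hy
          refine ⟨y, hy.1, ?_⟩
          have hyle : y ≤ M' := hlemma y hy.1 (by simpa using hy.2)
          simp [hg, min_eq_left hyle]
      have hspec' : spectrum ℝ b' = σ' := by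
        rw [hb'def, cfc_map_spectrum g b hb hcg, ← hσ, himg]
      have heq : cfc (id : ℝ → ℝ) b = cfc (fun x => g x + (M - M') • χ x) b := by
        apply cfc_congr
        intro x hx
        rw [← hσ] at hx
        by_cases h : x ≤ M'
        · simp [hg, hχ, min_eq_left h, h]
        · have hxM : x = M := by
            by_contra hne2
            exact h (hlemma x hx hne2)
          simp only [hg, hχ, if_neg h, smul_eq_mul, mul_one, id]
          rw [hxM, min_eq_right hM'lt.le]; ring
      have hdecomp : b = b' + (M - M') • e := by
        calc b = cfc (id : ℝ → ℝ) b := (cfc_id ℝ b hb).symm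
          _ = cfc (fun x => g x + (M - M') • χ x) b := heq
          _ = b' + (M - M') • e := by
              rw [cfc_add b g (fun x => (M - M') • χ x) hcg (by exact fun x hx => (hcχ x hx).const_smul (M - M')),
                cfc_smul (M - M') χ b hcχ]
      have hIH : ‖Dop' ρX.act ρY.act T b'‖ ≤ 2 * (M' - m) * S := by
        have h1 := ih b' hb'sa (by rw [hspec']; exact hfin')
          (by rw [hspec']; omega)
        have hsup' : sSup (spectrum ℝ b') = M' := by rw [hspec']
        have hinf' : sInf (spectrum ℝ b') = m := by
          rw [hspec']
          have hmM' : m ≤ M' := csInf_le hfin.bddBelow hM'mem.1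
          have hmmem' : m ∈ σ' := ⟨hmmem, by
            simp only [Set.mem_singleton_iff]
            exact ne_of_lt (lt_of_le_of_lt hmM' hM'lt)⟩
          exact le_antisymm (csInf_le hfin'.bddBelow hmmem')
            (le_csInf hne' fun x hx => csInf_le hfin.bddBelow hx.1)
        rwa [hsup', hinf'] at h1
      have hDe : ‖Dop' ρX.act ρY.act T e‖ ≤ 2 * S := Dop'_proj ρX ρY T hX1 hY1 hS heproj
      have hsplit : Dop' ρX.act ρY.act T b
          = Dop' ρX.act ρY.act T b' + (M - M') • Dop' ρX.act ρY.act T e := by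
        conv_lhs => rw [hdecomp]
        rw [Dop'_add, Dop'_smul_real]
      calc ‖Dop' ρX.act ρY.act T b‖
          ≤ ‖Dop' ρX.act ρY.act T b'‖ + ‖(M - M') • Dop' ρX.act ρY.act T e‖ := by
            rw [hsplit]; exact norm_add_le _ _
        _ ≤ 2 * (M' - m) * S + (M - M') * (2 * S) := by
            refine add_le_add hIH ?_
            refine le_trans (ContinuousLinearMap.opNorm_smul_le _ _) ?_
            rw [Real.norm_eq_abs, abs_of_nonneg (by linarith [hM'lt.le] : (0:ℝ) ≤ M - M')]
            exact mul_le_mul_of_nonneg_left hDe (by linarith [hM'lt.le])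
        _ = 2 * (M - m) * S := by ring

lemma Dop'_selfAdjoint (hX1 : ∀ x : X, ρX.act x 1 = x)
    (hY1 : ∀ y : Y, ρY.act y 1 = y) [Nontrivial A]
    {S : ℝ} (hS0 : 0 ≤ S)
    (hS : ∀ e : A, IsProjection e → ‖sandwich ρX ρY T (1 - e) e‖ ≤ S)
    {b : A} (hb : IsSelfAdjoint b) (hb1 : ‖b‖ ≤ 1)
    (hcl : b ∈ closure {c : A | IsSelfAdjoint c ∧ (spectrum ℂ c).Finite}) :
    ‖Dop' ρX.act ρY.act T b‖ ≤ 4 * S := by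
  refine le_of_forall_pos_le_add fun ε hε => ?_
  set D : ℝ := 4 * S + 2 * ‖T‖ + 1 with hD
  have hDpos : 0 < D := by positivity
  set δ : ℝ := ε / D with hδ
  have hδpos : 0 < δ := div_pos hε hDpos
  obtain ⟨c, hc, hdist⟩ := Metric.mem_closure_iff.mp hcl δ hδpos
  have hcsa : IsSelfAdjoint c := hc.1
  have hfinR : (spectrum ℝ c).Finite := by
    rw [← hcsa.spectrumRestricts.image]
    exact hc.2.image _
  have key := Dop'_selfAdjoint_finite_aux ρX ρY T hX1 hY1 hS (spectrum ℝ c).ncard c hcsa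
    hfinR le_rfl
  have hbc : ‖b - c‖ ≤ δ := by
    rw [dist_eq_norm] at hdist
    linarith
  have hnormc : ‖c‖ ≤ 1 + δ := by
    have h1 : ‖c‖ ≤ ‖b‖ + ‖b - c‖ := by
      calc ‖c‖ = ‖b - (b - c)‖ := by congr 1; abel
        _ ≤ ‖b‖ + ‖b - c‖ := norm_sub_le _ _
    linarith
  have hsupinf : sSup (spectrum ℝ c) - sInf (spectrum ℝ c) ≤ 2 * ‖c‖ := by
    have hne : (spectrum ℝ c).Nonempty := spectrumR_nonempty hcsa
    have h1 : |sSup (spectrum ℝ c)| ≤ ‖c‖ := by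
      simpa using spectrum.norm_le_norm_of_mem (hne.csSup_mem hfinR)
    have h2 : |sInf (spectrum ℝ c)| ≤ ‖c‖ := by
      simpa using spectrum.norm_le_norm_of_mem (hne.csInf_mem hfinR)
    rw [abs_le] at h1 h2
    linarith
  have hDc : ‖Dop' ρX.act ρY.act T c‖ ≤ 4 * (1 + δ) * S := by
    calc ‖Dop' ρX.act ρY.act T c‖
        ≤ 2 * (sSup (spectrum ℝ c) - sInf (spectrum ℝ c)) * S := key
      _ ≤ 2 * (2 * ‖c‖) * S := by
          apply mul_le_mul_of_nonneg_right _ hS0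
          linarith
      _ ≤ 4 * (1 + δ) * S := by
          apply mul_le_mul_of_nonneg_right _ hS0
          linarith
  have hsplit : Dop' ρX.act ρY.act T b
      = Dop' ρX.act ρY.act T c + Dop' ρX.act ρY.act T (b - c) := by
    rw [← Dop'_add]
    congr 1
    abel
  have hsmall : ‖Dop' ρX.act ρY.act T (b - c)‖ ≤ 2 * ‖T‖ * δ := by
    refine le_trans (norm_Dop'_le ρX.act ρY.act T ρX.norm_act_le ρY.norm_act_le _) ?_
    have h2T : (0:ℝ) ≤ 2 * ‖T‖ := by positivity
    exact mul_le_mul_of_nonneg_left hbc h2T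
  calc ‖Dop' ρX.act ρY.act T b‖
      ≤ ‖Dop' ρX.act ρY.act T c‖ + ‖Dop' ρX.act ρY.act T (b - c)‖ := by
        rw [hsplit]; exact norm_add_le _ _
    _ ≤ 4 * (1 + δ) * S + 2 * ‖T‖ * δ := add_le_add hDc hsmall
    _ = 4 * S + δ * (4 * S + 2 * ‖T‖) := by ring
    _ ≤ 4 * S + δ * D := by
        refine add_le_add le_rfl (mul_le_mul_of_nonneg_left (by rw [hD]; linarith : 4 * S + 2 * ‖T‖ ≤ D) hδpos.le)
    _ = 4 * S + ε := by
        rw [hδ, div_mul_cancel₀ _ (ne_of_gt hDpos)]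

end MyAux2

/-- Let `A` be a unital C*-algebra of real rank zero, `X` and `Y`
unital Banach right `A`-modules, and `T : X → Y` a continuous linear map.  Then
`‖ad(T)‖ ≤ 8·sup{‖e⊥Te‖ : e ∈ A projection}`, where `(e⊥Te)(x) = T(x·(1−e))·e`. -/
theorem stmt15 {A X Y : Type*} [CStarAlgebra A]
    [NormedAddCommGroup X] [NormedSpace ℂ X] [CompleteSpace X]
    [NormedAddCommGroup Y] [NormedSpace ℂ Y] [CompleteSpace Y]
    (hRR0 : ∀ a : A, IsSelfAdjoint a →
      a ∈ closure {b : A | IsSelfAdjoint b ∧ (spectrum ℂ b).Finite})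
    (ρX : BanachRightModule A X) (ρY : BanachRightModule A Y)
    (hX1 : ∀ x : X, ρX.act x 1 = x) (hY1 : ∀ y : Y, ρY.act y 1 = y)
    (T : X →L[ℂ] Y) :
    adNorm ρX ρY T ≤
      8 * sSup {r : ℝ | ∃ e : A, IsProjection e ∧ r = ‖sandwich ρX ρY T (1 - e) e‖} := by
  classical
  set P : Set ℝ := {r : ℝ | ∃ e : A, IsProjection e ∧ r = ‖sandwich ρX ρY T (1 - e) e‖} with hP
  have hPne : P.Nonempty := ⟨‖sandwich ρX ρY T (1 - 0) 0‖, 0,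
    ⟨by simp [IsSelfAdjoint], by simp [IsIdempotentElem]⟩, rfl⟩
  have hPbdd : BddAbove P := by
    refine ⟨‖T‖ * (‖(1:A)‖ + 1) * 1, ?_⟩
    rintro r ⟨e, he, rfl⟩
    have hee : ‖e‖ ≤ 1 := by
      rcases eq_or_ne e 0 with h | h
      · simp [h]
      · have h1 : ‖e‖ * ‖e‖ = ‖e‖ := by
          rw [← CStarRing.norm_star_mul_self (x := e), he.1.star_eq, he.2.eq]
        have h2 : 0 < ‖e‖ := norm_pos_iff.mpr h
        nlinarith
    have h1e : ‖(1:A) - e‖ ≤ ‖(1:A)‖ + 1 := le_trans (norm_sub_le _ _) (by linarith)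
    calc ‖sandwich ρX ρY T (1 - e) e‖
        ≤ ‖(ρY.act.flip e).comp T‖ * ‖ρX.act.flip (1 - e)‖ :=
          ContinuousLinearMap.opNorm_comp_le _ _
      _ ≤ (‖ρY.act.flip e‖ * ‖T‖) * ‖ρX.act.flip (1 - e)‖ := by
          apply mul_le_mul_of_nonneg_right (ContinuousLinearMap.opNorm_comp_le _ _)
            (norm_nonneg _)
      _ ≤ (1 * ‖T‖) * (‖(1:A)‖ + 1) := by
          apply mul_le_mul
          · exact mul_le_mul_of_nonneg_right
              (le_trans (norm_flip_le ρY.act ρY.norm_act_le e) hee) (norm_nonneg T)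
          · exact le_trans (norm_flip_le ρX.act ρX.norm_act_le _) h1e
          · exact norm_nonneg _
          · positivity
      _ = ‖T‖ * (‖(1:A)‖ + 1) * 1 := by ring
  set S : ℝ := sSup P with hSdef
  have hSmem : ∀ e : A, IsProjection e → ‖sandwich ρX ρY T (1 - e) e‖ ≤ S :=
    fun e he => le_csSup hPbdd ⟨e, he, rfl⟩
  have hS0 : 0 ≤ S := by
    obtain ⟨r, ⟨e, he, hre⟩⟩ := hPne
    exact le_trans (norm_nonneg _) (hSmem e he)
  rw [adNorm]
  apply Real.sSup_le _ (by linarith)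
  rintro r ⟨a, ha, rfl⟩
  show ‖Dop' ρX.act ρY.act T a‖ ≤ 8 * S
  by_cases hA : Subsingleton A
  · have ha1 : a = 1 := Subsingleton.elim a 1
    rw [ha1, Dop'_one ρX ρY T hX1 hY1, norm_zero]
    linarith
  · haveI : Nontrivial A := not_subsingleton_iff_nontrivial.mp hA
    set b : A := (realPart a : A) with hbdef
    set c : A := (imaginaryPart a : A) with hcdef
    have hbsa : IsSelfAdjoint b := (realPart a).prop
    have hcsa : IsSelfAdjoint c := (imaginaryPart a).prop
    have hbn : ‖b‖ ≤ 1 := by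
      rw [hbdef, realPart_apply_coe]
      calc ‖(2:ℝ)⁻¹ • (a + star a)‖ = (2:ℝ)⁻¹ * ‖a + star a‖ := by
            rw [show ‖(2:ℝ)⁻¹ • (a + star a)‖ = ‖(2:ℝ)⁻¹‖ * ‖a + star a‖ from norm_smul _ _]
            norm_num [Real.norm_eq_abs]
        _ ≤ (2:ℝ)⁻¹ * (‖a‖ + ‖a‖) := by
            apply mul_le_mul_of_nonneg_left (le_trans (norm_add_le _ _) (by simp)) (by norm_num)
        _ ≤ 1 := by linarith
    have hcn : ‖c‖ ≤ 1 := by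
      rw [hcdef, imaginaryPart_apply_coe]
      calc ‖-Complex.I • (2:ℝ)⁻¹ • (a - star a)‖ = (2:ℝ)⁻¹ * ‖a - star a‖ := by
            rw [show ‖-Complex.I • (2:ℝ)⁻¹ • (a - star a)‖
                = ‖-Complex.I‖ * ‖(2:ℝ)⁻¹ • (a - star a)‖ from norm_smul _ _,
              show ‖(2:ℝ)⁻¹ • (a - star a)‖ = ‖(2:ℝ)⁻¹‖ * ‖a - star a‖ from norm_smul _ _]
            norm_num [Real.norm_eq_abs]
        _ ≤ (2:ℝ)⁻¹ * (‖a‖ + ‖a‖) := by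
            apply mul_le_mul_of_nonneg_left (le_trans (norm_sub_le _ _) (by simp)) (by norm_num)
        _ ≤ 1 := by linarith
    have hb4 : ‖Dop' ρX.act ρY.act T b‖ ≤ 4 * S :=
      Dop'_selfAdjoint ρX ρY T hX1 hY1 hS0 hSmem hbsa hbn (hRR0 b hbsa)
    have hc4 : ‖Dop' ρX.act ρY.act T c‖ ≤ 4 * S :=
      Dop'_selfAdjoint ρX ρY T hX1 hY1 hS0 hSmem hcsa hcn (hRR0 c hcsa)
    have hsplit : Dop' ρX.act ρY.act T a
        = Dop' ρX.act ρY.act T b + Complex.I • Dop' ρX.act ρY.act T c := by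
      conv_lhs => rw [← realPart_add_I_smul_imaginaryPart a]
      rw [Dop'_add, Dop'_smul]
    calc ‖Dop' ρX.act ρY.act T a‖
        ≤ ‖Dop' ρX.act ρY.act T b‖ + ‖Complex.I • Dop' ρX.act ρY.act T c‖ := by
          rw [hsplit]; exact norm_add_le _ _
      _ ≤ 4 * S + 4 * S := by
          refine add_le_add hb4 ?_
          refine le_trans (ContinuousLinearMap.opNorm_smul_le _ _) ?_
          rw [Complex.norm_I, one_mul]
          exact hc4
      _ = 8 * S := by ring
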